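/- Let P be a finite nonempty set of points in ℝ^d and for φ : P → ℝ_{≥0} with Σ_{z∈P} φ(z) > 0 define F(φ) := (Σ_{(x,y)∈P×P} min{φ(x),φ(y)}·‖x−y‖²) / (2·Σ_{z∈P} φ(z)). Then for every φ : P → ℝ_{≥0} with Σ_{z∈P} φ(z) > 0, there exists ψ : P → {0,1} with Σ_{z∈P} ψ(z) > 0 such that F(φ) ≤ F(ψ). -/

import Mathlib

open Finset
open scoped Classical

/-- `F(φ)` is maximized over nonnegative weights by a 0/1-valued weight vector:
for every `φ : P → ℝ≥0` with positive total weight there is `ψ : P → {0,1}` with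
positive total weight such that `F(φ) ≤ F(ψ)`, where
`F(φ) = (Σ_{(x,y)∈P×P} min{φ(x),φ(y)}·‖x−y‖²) / (2·Σ_{z∈P} φ(z))`. -/
theorem exists_boolean_maximizer {d : ℕ}
    (P : Finset (EuclideanSpace ℝ (Fin d))) (hP : P.Nonempty)
    (φ : EuclideanSpace ℝ (Fin d) → ℝ) (hφ : ∀ x ∈ P, 0 ≤ φ x)
    (hφpos : 0 < ∑ z ∈ P, φ z) :
    ∃ ψ : EuclideanSpace ℝ (Fin d) → ℝ,
      (∀ x ∈ P, ψ x = 0 ∨ ψ x = 1) ∧ 0 < ∑ z ∈ P, ψ z ∧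
        (∑ x ∈ P, ∑ y ∈ P, min (φ x) (φ y) * ‖x - y‖ ^ 2) / (2 * ∑ z ∈ P, φ z) ≤
          (∑ x ∈ P, ∑ y ∈ P, min (ψ x) (ψ y) * ‖x - y‖ ^ 2) / (2 * ∑ z ∈ P, ψ z) := by
  classical
  set V : Finset ℝ := (P.image φ).filter (fun t => 0 < t) with hVdef
  have hVmem : ∀ t, t ∈ V ↔ (∃ z ∈ P, φ z = t) ∧ 0 < t := by
    intro t; simp [hVdef, Finset.mem_filter, Finset.mem_image]
  have hVne : V.Nonempty := by
    obtain ⟨z, hz, hzpos⟩ : ∃ z ∈ P, 0 < φ z := by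
      by_contra h; push_neg at h
      have : ∑ z ∈ P, φ z ≤ 0 := Finset.sum_nonpos (fun z hz => h z hz)
      linarith
    exact ⟨φ z, (hVmem _).2 ⟨⟨z, hz, rfl⟩, hzpos⟩⟩
  set V0 : Finset ℝ := insert (0:ℝ) V with hV0def
  have hVsub : V ⊆ V0 := Finset.subset_insert _ _
  have hVpos : ∀ t ∈ V, 0 < t := fun t ht => ((hVmem t).1 ht).2
  set pred : ℝ → ℝ := fun t =>
    if h : ((V0.filter (fun s => s < t))).Nonempty then (V0.filter (fun s => s < t)).max' h
    else 0 with hpreddef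
  have hpred : ∀ t ∈ V, pred t ∈ V0 ∧ pred t < t ∧ ∀ s ∈ V0, s < t → s ≤ pred t := by
    intro t ht
    have h0 : (0:ℝ) ∈ V0.filter (fun s => s < t) := by
      simp [hV0def, Finset.mem_filter, hVpos t ht]
    have hne : (V0.filter (fun s => s < t)).Nonempty := ⟨0, h0⟩
    have hmax : pred t ∈ V0.filter (fun s => s < t) := by
      rw [hpreddef]; simp only [dif_pos hne]; exact Finset.max'_mem _ hne
    refine ⟨(Finset.mem_filter.1 hmax).1, (Finset.mem_filter.1 hmax).2, ?_⟩
    intro s hs hst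
    rw [hpreddef]; simp only [dif_pos hne]
    exact Finset.le_max' (V0.filter (fun u => u < t)) s (Finset.mem_filter.2 ⟨hs, hst⟩)
  set w : ℝ → ℝ := fun t => t - pred t with hwdef
  have hwpos : ∀ t ∈ V, 0 < w t := fun t ht => sub_pos.2 (hpred t ht).2.1
  -- telescoping identity
  have key : ∀ n : ℕ, ∀ a ∈ V0, (V.filter (fun t => t ≤ a)).card ≤ n →
      ∑ t ∈ V.filter (fun t => t ≤ a), w t = a := by
    intro n
    induction n with
    | zero =>
      intro a ha hcard
      have hempty : V.filter (fun t => t ≤ a) = ∅ :=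
        Finset.card_eq_zero.1 (Nat.le_zero.1 hcard)
      rcases Finset.mem_insert.1 ha with h0 | hV
      · subst h0; simp [hempty]
      · exfalso
        have : a ∈ V.filter (fun t => t ≤ a) := Finset.mem_filter.2 ⟨hV, le_refl a⟩
        simp [hempty] at this
    | succ n ih =>
      intro a ha hcard
      rcases Finset.mem_insert.1 ha with h0 | hV
      · have hempty : V.filter (fun t => t ≤ a) = ∅ := by
          apply Finset.filter_eq_empty_iff.2
          intro t ht h
          exact absurd (h.trans_eq h0) (not_le.2 (hVpos t ht))
        subst h0; simp [hempty]
      · obtain ⟨hpmem, hplt, hple⟩ := hpred a hV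
        have hsplit : V.filter (fun t => t ≤ a)
            = insert a (V.filter (fun t => t ≤ pred a)) := by
          ext t
          simp only [Finset.mem_filter, Finset.mem_insert]
          constructor
          · rintro ⟨htV, hta⟩
            rcases eq_or_lt_of_le hta with h | h
            · exact Or.inl h
            · exact Or.inr ⟨htV, hple t (hVsub htV) h⟩
          · rintro (rfl | ⟨htV, htp⟩)
            · exact ⟨hV, le_refl _⟩
            · exact ⟨htV, htp.trans hplt.le⟩
        have hanot : a ∉ V.filter (fun t => t ≤ pred a) := by
          intro h
          exact absurd (Finset.mem_filter.1 h).2 (not_le.2 hplt)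
        have hsubset : V.filter (fun t => t ≤ pred a) ⊆ (V.filter (fun t => t ≤ a)).erase a := by
          intro t ht
          rcases Finset.mem_filter.1 ht with ⟨htV, htp⟩
          refine Finset.mem_erase.2 ⟨?_, Finset.mem_filter.2 ⟨htV, htp.trans hplt.le⟩⟩
          rintro rfl; exact hanot ht
        have hcard' : (V.filter (fun t => t ≤ pred a)).card ≤ n := by
          have h1 := Finset.card_le_card hsubset
          have h2 : ((V.filter (fun t => t ≤ a)).erase a).card
              = (V.filter (fun t => t ≤ a)).card - 1 :=
            Finset.card_erase_of_mem (Finset.mem_filter.2 ⟨hV, le_refl a⟩)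
          omega
        rw [hsplit, Finset.sum_insert hanot, ih (pred a) hpmem hcard']
        simp [hwdef]
  have decomp : ∀ a ∈ V0, ∑ t ∈ V, w t * (if t ≤ a then (1:ℝ) else 0) = a := by
    intro a ha
    calc ∑ t ∈ V, w t * (if t ≤ a then (1:ℝ) else 0)
        = ∑ t ∈ V, (if t ≤ a then w t else 0) :=
          Finset.sum_congr rfl (fun t _ => by by_cases h : t ≤ a <;> simp [h])
      _ = ∑ t ∈ V.filter (fun t => t ≤ a), w t := (Finset.sum_filter _ _).symm
      _ = a := key (V.filter (fun t => t ≤ a)).card a ha le_rfl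
  have hmemV0 : ∀ x ∈ P, φ x ∈ V0 := by
    intro x hx
    rcases eq_or_lt_of_le (hφ x hx) with h | h
    · simp [hV0def, ← h]
    · exact hVsub ((hVmem _).2 ⟨⟨x, hx, rfl⟩, h⟩)
  -- the indicator family
  set ψf : ℝ → EuclideanSpace ℝ (Fin d) → ℝ :=
    fun t x => if t ≤ φ x then (1:ℝ) else 0 with hψdef
  set N : ℝ → ℝ := fun t => ∑ x ∈ P, ∑ y ∈ P, min (ψf t x) (ψf t y) * ‖x - y‖ ^ 2 with hNdef
  set D : ℝ → ℝ := fun t => ∑ z ∈ P, ψf t z with hDdef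
  have hmin : ∀ t x y, min (ψf t x) (ψf t y) = if t ≤ min (φ x) (φ y) then (1:ℝ) else 0 := by
    intro t x y
    simp only [hψdef]
    rcases le_or_gt t (φ x) with hx | hx <;> rcases le_or_gt t (φ y) with hy | hy
    · rw [if_pos hx, if_pos hy, if_pos (le_min hx hy)]; simp
    · rw [if_pos hx, if_neg (not_le.mpr hy),
        if_neg (fun h => absurd ((le_min_iff.1 h).2) (not_le.mpr hy))]
      norm_num [min_def]
    · rw [if_neg (not_le.mpr hx), if_pos hy,
        if_neg (fun h => absurd ((le_min_iff.1 h).1) (not_le.mpr hx))]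
      norm_num [min_def]
    · rw [if_neg (not_le.mpr hx), if_neg (not_le.mpr hy),
        if_neg (fun h => absurd ((le_min_iff.1 h).1) (not_le.mpr hx))]
      norm_num [min_def]
  have hDpos : ∀ t ∈ V, 0 < D t := by
    intro t ht
    obtain ⟨⟨z, hz, hzt⟩, htpos⟩ := (hVmem t).1 ht
    have h1 : ψf t z = 1 := by simp [hψdef, hzt.ge]
    have : (1:ℝ) ≤ D t := by
      rw [hDdef, ← h1]
      exact Finset.single_le_sum (f := ψf t) (fun i _ => by positivity) hz
    linarith
  -- decomposition of numerator and denominator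
  have hD : ∑ z ∈ P, φ z = ∑ t ∈ V, w t * D t := by
    have : ∀ z ∈ P, φ z = ∑ t ∈ V, w t * ψf t z := by
      intro z hz
      rw [← decomp (φ z) (hmemV0 z hz)]
    rw [Finset.sum_congr rfl this, Finset.sum_comm]
    simp [hDdef, Finset.mul_sum]
  have hN : ∑ x ∈ P, ∑ y ∈ P, min (φ x) (φ y) * ‖x - y‖ ^ 2 = ∑ t ∈ V, w t * N t := by
    have step : ∀ x ∈ P, ∀ y ∈ P, min (φ x) (φ y) * ‖x - y‖ ^ 2
        = ∑ t ∈ V, w t * (min (ψf t x) (ψf t y) * ‖x - y‖ ^ 2) := by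
      intro x hx y hy
      have hm : min (φ x) (φ y) ∈ V0 := by
        rcases min_choice (φ x) (φ y) with h | h
        · rw [h]; exact hmemV0 x hx
        · rw [h]; exact hmemV0 y hy
      calc min (φ x) (φ y) * ‖x - y‖ ^ 2
          = (∑ t ∈ V, w t * (if t ≤ min (φ x) (φ y) then (1:ℝ) else 0)) * ‖x - y‖ ^ 2 := by
            rw [decomp _ hm]
        _ = ∑ t ∈ V, w t * (min (ψf t x) (ψf t y) * ‖x - y‖ ^ 2) := by
            rw [Finset.sum_mul]
            apply Finset.sum_congr rfl
            intro t _
            rw [hmin t x y]; ring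
    calc ∑ x ∈ P, ∑ y ∈ P, min (φ x) (φ y) * ‖x - y‖ ^ 2
        = ∑ x ∈ P, ∑ y ∈ P, ∑ t ∈ V, w t * (min (ψf t x) (ψf t y) * ‖x - y‖ ^ 2) := by
          apply Finset.sum_congr rfl; intro x hx
          apply Finset.sum_congr rfl; intro y hy
          exact step x hx y hy
      _ = ∑ x ∈ P, ∑ t ∈ V, ∑ y ∈ P, w t * (min (ψf t x) (ψf t y) * ‖x - y‖ ^ 2) :=
          Finset.sum_congr rfl fun x _ => Finset.sum_comm
      _ = ∑ t ∈ V, ∑ x ∈ P, ∑ y ∈ P, w t * (min (ψf t x) (ψf t y) * ‖x - y‖ ^ 2) :=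
          Finset.sum_comm
      _ = ∑ t ∈ V, w t * N t := by
          apply Finset.sum_congr rfl; intro t _
          simp [hNdef, Finset.mul_sum]
  -- choose the best threshold
  obtain ⟨t₀, ht₀, hmax⟩ := Finset.exists_max_image V (fun t => N t / D t) hVne
  have hDt₀ : 0 < D t₀ := hDpos t₀ ht₀
  set R : ℝ := N t₀ / D t₀ with hRdef
  have hNs : ∀ s ∈ V, N s ≤ R * D s := by
    intro s hs
    have hDs := hDpos s hs
    have := hmax s hs
    rw [div_le_div_iff₀ hDs hDt₀] at this
    calc N s = (N s / D s) * D s := by field_simp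
      _ ≤ R * D s := by
          apply mul_le_mul_of_nonneg_right _ hDs.le
          exact hmax s hs
  have hNle : ∑ x ∈ P, ∑ y ∈ P, min (φ x) (φ y) * ‖x - y‖ ^ 2 ≤ R * ∑ z ∈ P, φ z := by
    rw [hN, hD, Finset.mul_sum]
    apply Finset.sum_le_sum
    intro t ht
    have := mul_le_mul_of_nonneg_left (hNs t ht) (hwpos t ht).le
    linarith [this]
  refine ⟨ψf t₀, ?_, ?_, ?_⟩
  · intro x _
    by_cases h : t₀ ≤ φ x <;> simp [hψdef, h]
  · exact hDt₀
  · have h2D : (0:ℝ) < 2 * ∑ z ∈ P, φ z := by linarith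
    have step1 : (∑ x ∈ P, ∑ y ∈ P, min (φ x) (φ y) * ‖x - y‖ ^ 2) / (2 * ∑ z ∈ P, φ z)
        ≤ (R * ∑ z ∈ P, φ z) / (2 * ∑ z ∈ P, φ z) :=
      (div_le_div_iff_of_pos_right h2D).mpr hNle
    have step2 : (R * ∑ z ∈ P, φ z) / (2 * ∑ z ∈ P, φ z) = N t₀ / (2 * D t₀) := by
      rw [hRdef]
      field_simp
    calc (∑ x ∈ P, ∑ y ∈ P, min (φ x) (φ y) * ‖x - y‖ ^ 2) / (2 * ∑ z ∈ P, φ z)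
        ≤ (R * ∑ z ∈ P, φ z) / (2 * ∑ z ∈ P, φ z) := step1
      _ = N t₀ / (2 * D t₀) := step2
      _ = (∑ x ∈ P, ∑ y ∈ P, min (ψf t₀ x) (ψf t₀ y) * ‖x - y‖ ^ 2) / (2 * ∑ z ∈ P, ψf t₀ z) := by
          rw [hNdef, hDdef]
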